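/- There is no egr(v,4,5,8)-graph, i.e., there is no 4-regular graph of girth 5 in which every edge lies on exactly 8 cycles of length 5. -/

import Mathlib

open SimpleGraph

/-- `c` is a cycle subgraph of `G` of length `g`. -/
def IsCycleSub {V : Type*} (G : SimpleGraph V) (g : ℕ) (c : G.Subgraph) : Prop :=
  ∃ (a : V) (w : G.Walk a a), w.IsCycle ∧ w.length = g ∧ c = w.toSubgraph

/-- `p` is a path subgraph of `G` on `n` vertices. -/
def IsPathSub {V : Type*} (G : SimpleGraph V) (n : ℕ) (p : G.Subgraph) : Prop :=
  ∃ (a b : V) (w : G.Walk a b), w.IsPath ∧ w.length + 1 = n ∧ p = w.toSubgraph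

/-- `G` is an edge-girth-regular `(v,k,g,λ)`-graph. -/
def IsEGR {V : Type*} (G : SimpleGraph V) (v k g lam : ℕ) : Prop :=
  Nat.card V = v ∧ (∀ x : V, (G.neighborSet x).ncard = k) ∧ G.girth = g ∧
  ∀ e ∈ G.edgeSet,
    {c : G.Subgraph | IsCycleSub G g c ∧ e ∈ c.edgeSet}.ncard = lam

attribute [local instance] Classical.propDecidable

variable {V : Type} {G : SimpleGraph V}

lemma cycle_ge (hgirth : G.girth = 5) {a : V} (w : G.Walk a a) (hw : w.IsCycle) :
    5 ≤ w.length := by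
  have hna : ¬ G.IsAcyclic := fun h => by
    rw [h.girth_eq_zero] at hgirth; omega
  have htop : G.egirth ≠ ⊤ := fun h => hna (SimpleGraph.egirth_eq_top.mp h)
  have h5 : G.egirth = (5 : ℕ∞) := by
    rw [← ENat.coe_toNat htop]
    exact_mod_cast congrArg (Nat.cast : ℕ → ℕ∞) hgirth
  have h := SimpleGraph.le_egirth (G := G) (n := 5) |>.mp (le_of_eq h5.symm) a w hw
  exact_mod_cast h

lemma no3 (hgirth : G.girth = 5) {x y z : V} (h1 : G.Adj x y) (h2 : G.Adj y z)
    (h3 : G.Adj z x) : False := by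
  have hxz : x ≠ z := fun h => by subst h; exact G.irrefl h3
  let w : G.Walk x x := .cons h1 (.cons h2 (.cons h3 .nil))
  have hc : w.IsCycle := by
    rw [SimpleGraph.Walk.isCycle_def]
    refine ⟨⟨?_⟩, by simp [w], ?_⟩
    · simp [w, Walk.edges_cons, h1.ne, h2.ne, h3.ne, hxz, Sym2.eq, Sym2.rel_iff',
        h1.ne', h2.ne', h3.ne', hxz.symm]
    · simp [w, Walk.support_cons, h2.ne, hxz, h3.ne, hxz.symm, h2.ne', h1.ne']
  have := cycle_ge hgirth w hc
  simp [w] at this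

lemma no4 (hgirth : G.girth = 5) {x y z t : V} (h1 : G.Adj x y) (h2 : G.Adj y z)
    (h3 : G.Adj z t) (h4 : G.Adj t x) (hxz : x ≠ z) (hyt : y ≠ t) : False := by
  let w : G.Walk x x := .cons h1 (.cons h2 (.cons h3 (.cons h4 .nil)))
  have hc : w.IsCycle := by
    rw [SimpleGraph.Walk.isCycle_def]
    refine ⟨⟨?_⟩, by simp [w], ?_⟩
    · simp [w, Walk.edges_cons, h1.ne, h2.ne, h3.ne, h4.ne, hxz, hyt, Sym2.eq, Sym2.rel_iff',
        h1.ne', h2.ne', h3.ne', h4.ne', hxz.symm, hyt.symm]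
    · simp [w, Walk.support_cons, h1.ne, h1.ne', h2.ne, h2.ne', h3.ne, h3.ne', h4.ne, h4.ne', hxz, hyt, hxz.symm, hyt.symm]
  have := cycle_ge hgirth w hc
  simp [w] at this

/-- no common neighbor of adjacent vertices -/
lemma cn_adj (hgirth : G.girth = 5) {x y w : V} (hxy : G.Adj x y) (h1 : G.Adj w x)
    (h2 : G.Adj w y) : False := no3 hgirth h1 hxy h2.symm

/-- common neighbors are unique -/
lemma cn_unique (hgirth : G.girth = 5) {x y w1 w2 : V} (hxy : x ≠ y)
    (h1 : G.Adj w1 x) (h2 : G.Adj w1 y) (h3 : G.Adj w2 x) (h4 : G.Adj w2 y) : w1 = w2 := by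
  by_contra hne
  exact no4 hgirth h1.symm h2 h4.symm h3 hxy hne

lemma nb_finite (hreg : ∀ x : V, (G.neighborSet x).ncard = 4) (x : V) :
    (G.neighborSet x).Finite := by
  by_contra h
  have := Set.Infinite.ncard (s := G.neighborSet x) h
  rw [hreg x] at this; omega

noncomputable def Nb (G : SimpleGraph V) (hreg : ∀ x : V, (G.neighborSet x).ncard = 4)
    (x : V) : Finset V := (nb_finite hreg x).toFinset

lemma mem_Nb {hreg : ∀ x : V, (G.neighborSet x).ncard = 4} {x y : V} :
    y ∈ Nb G hreg x ↔ G.Adj x y := by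
  simp [Nb, Set.Finite.mem_toFinset]

lemma card_Nb {hreg : ∀ x : V, (G.neighborSet x).ncard = 4} (x : V) :
    (Nb G hreg x).card = 4 := by
  rw [Nb, ← Set.ncard_eq_toFinset_card _ (nb_finite hreg x), hreg x]

lemma card_filter_product {α β : Type} (A : Finset α)
    (B : Finset β) (p : α × β → Prop) [DecidablePred p] :
    ((A ×ˢ B).filter p).card = ∑ a ∈ A, (B.filter (fun b => p (a, b))).card := by
  rw [Finset.card_filter, Finset.sum_product]
  exact Finset.sum_congr rfl fun a _ => (Finset.card_filter _ _).symm

lemma sum_card_swap {α β : Type} (A : Finset α) (B : Finset β) (r : α → β → Prop)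
    [∀ a, DecidablePred (r a)] :
    ∑ a ∈ A, (B.filter (fun b => r a b)).card = ∑ b ∈ B, (A.filter (fun a => r a b)).card := by
  simp_rw [Finset.card_filter]
  exact Finset.sum_comm

/-- pentagon walk u-x-w-y-v-u -/
def pentW {u x w y v : V} (h1 : G.Adj u x) (h2 : G.Adj x w) (h3 : G.Adj w y)
    (h4 : G.Adj y v) (h5 : G.Adj v u) : G.Walk u u :=
  .cons h1 (.cons h2 (.cons h3 (.cons h4 (.cons h5 .nil))))

lemma pentW_length {u x w y v : V} (h1 : G.Adj u x) (h2 : G.Adj x w) (h3 : G.Adj w y)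
    (h4 : G.Adj y v) (h5 : G.Adj v u) : (pentW h1 h2 h3 h4 h5).length = 5 := by
  simp [pentW]

lemma pentW_adj {u x w y v a b : V} {h1 : G.Adj u x} {h2 : G.Adj x w} {h3 : G.Adj w y}
    {h4 : G.Adj y v} {h5 : G.Adj v u} :
    (pentW h1 h2 h3 h4 h5).toSubgraph.Adj a b ↔
      s(a, b) = s(u, x) ∨ s(a, b) = s(x, w) ∨ s(a, b) = s(w, y) ∨ s(a, b) = s(y, v) ∨
        s(a, b) = s(v, u) := by
  simp only [pentW, Walk.toSubgraph, Subgraph.sup_adj, subgraphOfAdj_adj, singletonSubgraph_adj,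
    Pi.bot_apply]
  tauto

lemma pentW_verts {u x w y v : V} {h1 : G.Adj u x} {h2 : G.Adj x w} {h3 : G.Adj w y}
    {h4 : G.Adj y v} {h5 : G.Adj v u} :
    (pentW h1 h2 h3 h4 h5).toSubgraph.verts = {u, x, w, y, v} := by
  rw [Walk.verts_toSubgraph]
  ext z
  simp [pentW]
  tauto

lemma pentW_edges {u x w y v : V} (h1 : G.Adj u x) (h2 : G.Adj x w) (h3 : G.Adj w y)
    (h4 : G.Adj y v) (h5 : G.Adj v u) :
    (pentW h1 h2 h3 h4 h5).edges = [s(u,x), s(x,w), s(w,y), s(y,v), s(v,u)] := by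
  simp [pentW]

lemma pentW_cycle {u x w y v : V} (h1 : G.Adj u x) (h2 : G.Adj x w) (h3 : G.Adj w y)
    (h4 : G.Adj y v) (h5 : G.Adj v u) (hxy : x ≠ y) (hxv : x ≠ v) (hwu : w ≠ u)
    (hwv : w ≠ v) (hyu : y ≠ u) : (pentW h1 h2 h3 h4 h5).IsCycle := by
  rw [SimpleGraph.Walk.isCycle_def]
  refine ⟨⟨?_⟩, by simp [pentW], ?_⟩
  · simp [pentW, Walk.edges_cons, Sym2.eq, Sym2.rel_iff', h1.ne, h1.ne', h2.ne, h2.ne',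
      h3.ne, h3.ne', h4.ne, h4.ne', h5.ne, h5.ne', hxy, hxy.symm, hxv, hxv.symm, hwu, hwu.symm,
      hwv, hwv.symm, hyu, hyu.symm]
  · simp [pentW, Walk.support_cons, h1.ne, h1.ne', h2.ne, h2.ne', h3.ne, h3.ne', h4.ne, h4.ne',
      h5.ne, h5.ne', hxy, hxy.symm, hxv, hxv.symm, hwu, hwu.symm, hwv, hwv.symm, hyu, hyu.symm]

lemma cycle5_decomp {a : V} (w : G.Walk a a) (hl : w.length = 5) :
    ∃ (x1 x2 x3 x4 : V) (h1 : G.Adj a x1) (h2 : G.Adj x1 x2) (h3 : G.Adj x2 x3)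
      (h4 : G.Adj x3 x4) (h5 : G.Adj x4 a), w = pentW h1 h2 h3 h4 h5 := by
  cases w with
  | nil => simp at hl
  | cons h1 w =>
    cases w with
    | nil => simp at hl
    | cons h2 w =>
      cases w with
      | nil => simp at hl
      | cons h3 w =>
        cases w with
        | nil => simp at hl
        | cons h4 w =>
          cases w with
          | nil => simp at hl
          | cons h5 w =>
            cases w with
            | nil => exact ⟨_, _, _, _, h1, h2, h3, h4, h5, rfl⟩
            | cons h6 w => simp at hl

noncomputable def pairs (G : SimpleGraph V) (hreg : ∀ x : V, (G.neighborSet x).ncard = 4)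
    (u v : V) : Finset (V × V) :=
  (((Nb G hreg u).erase v) ×ˢ ((Nb G hreg v).erase u)).filter
    (fun p => ∃ w, G.Adj w p.1 ∧ G.Adj w p.2)

lemma mem_pairs {hreg : ∀ x : V, (G.neighborSet x).ncard = 4} {u v x y : V} :
    (x, y) ∈ pairs G hreg u v ↔
      (G.Adj u x ∧ x ≠ v) ∧ (G.Adj v y ∧ y ≠ u) ∧ ∃ w, G.Adj w x ∧ G.Adj w y := by
  simp only [pairs, Finset.mem_filter, Finset.mem_product, Finset.mem_erase, mem_Nb]
  tauto

lemma pent_distinct (hgirth : G.girth = 5) {u v x y w : V} (huv : G.Adj u v)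
    (hux : G.Adj u x) (hvy : G.Adj v y) (hxv : x ≠ v) (hyu : y ≠ u)
    (hwx : G.Adj w x) (hwy : G.Adj w y) : x ≠ y ∧ w ≠ u ∧ w ≠ v := by
  refine ⟨?_, ?_, ?_⟩
  · rintro rfl; exact cn_adj hgirth huv hux.symm hvy.symm
  · rintro rfl; exact no3 hgirth hwy hvy.symm huv.symm
  · rintro rfl; exact no3 hgirth hwx hux.symm huv

noncomputable def phi (G : SimpleGraph V) {u v : V} (huv : G.Adj u v) (p : V × V) :
    G.Subgraph :=
  if h : G.Adj u p.1 ∧ G.Adj v p.2 ∧ ∃ w, G.Adj w p.1 ∧ G.Adj w p.2 then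
    (pentW h.1 h.2.2.choose_spec.1.symm h.2.2.choose_spec.2 h.2.1.symm huv.symm).toSubgraph
  else ⊥

lemma card_pairs (hreg : ∀ x : V, (G.neighborSet x).ncard = 4) (hgirth : G.girth = 5)
    (hlam : ∀ e ∈ G.edgeSet, {c : G.Subgraph | IsCycleSub G 5 c ∧ e ∈ c.edgeSet}.ncard = 8)
    {u v : V} (huv : G.Adj u v) : (pairs G hreg u v).card = 8 := by
  classical
  have h8 := hlam s(u,v) huv
  have hmaps : ∀ p ∈ pairs G hreg u v,
      phi G huv p ∈ {c : G.Subgraph | IsCycleSub G 5 c ∧ s(u,v) ∈ c.edgeSet} := by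
    rintro ⟨x, y⟩ hp
    rw [mem_pairs] at hp
    obtain ⟨⟨hux, hxv⟩, ⟨hvy, hyu⟩, hex⟩ := hp
    have hcond : G.Adj u x ∧ G.Adj v y ∧ ∃ w, G.Adj w x ∧ G.Adj w y := ⟨hux, hvy, hex⟩
    have hΦ : phi G huv (x, y) = (pentW hcond.1 hcond.2.2.choose_spec.1.symm
        hcond.2.2.choose_spec.2 hcond.2.1.symm huv.symm).toSubgraph := dif_pos hcond
    obtain ⟨hwx, hwy⟩ := hcond.2.2.choose_spec
    obtain ⟨hxy, hwu, hwv⟩ := pent_distinct hgirth huv hux hvy hxv hyu hwx hwy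
    rw [hΦ]
    refine ⟨⟨u, _, pentW_cycle _ _ _ _ _ hxy hxv hwu hwv hyu, pentW_length _ _ _ _ _, rfl⟩, ?_⟩
    rw [Walk.edgeSet_toSubgraph]
    simp [pentW_edges, Sym2.eq_swap]
  have hinj : Set.InjOn (phi G huv) ↑(pairs G hreg u v) := by
    rintro ⟨x, y⟩ hp ⟨x', y'⟩ hp' heq
    rw [Finset.mem_coe, mem_pairs] at hp hp'
    obtain ⟨⟨hux, hxv⟩, ⟨hvy, hyu⟩, hex⟩ := hp
    obtain ⟨⟨hux', hxv'⟩, ⟨hvy', hyu'⟩, hex'⟩ := hp'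
    have hcond : G.Adj u x ∧ G.Adj v y ∧ ∃ w, G.Adj w x ∧ G.Adj w y := ⟨hux, hvy, hex⟩
    have hcond' : G.Adj u x' ∧ G.Adj v y' ∧ ∃ w, G.Adj w x' ∧ G.Adj w y' := ⟨hux', hvy', hex'⟩
    obtain ⟨hwx, hwy⟩ := hcond.2.2.choose_spec
    obtain ⟨hxy, hwu, hwv⟩ := pent_distinct hgirth huv hux hvy hxv hyu hwx hwy
    rw [show phi G huv (x, y) = (pentW hcond.1 hcond.2.2.choose_spec.1.symm
        hcond.2.2.choose_spec.2 hcond.2.1.symm huv.symm).toSubgraph from dif_pos hcond,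
      show phi G huv (x', y') = (pentW hcond'.1 hcond'.2.2.choose_spec.1.symm
        hcond'.2.2.choose_spec.2 hcond'.2.1.symm huv.symm).toSubgraph from dif_pos hcond']
      at heq
    have hax : (pentW hcond.1 hcond.2.2.choose_spec.1.symm
        hcond.2.2.choose_spec.2 hcond.2.1.symm huv.symm).toSubgraph.Adj u x' := by
      rw [heq, pentW_adj]; left; rfl
    have hay : (pentW hcond.1 hcond.2.2.choose_spec.1.symm
        hcond.2.2.choose_spec.2 hcond.2.1.symm huv.symm).toSubgraph.Adj v y' := by
      rw [heq, pentW_adj]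
      right; right; right; left; exact Sym2.eq_swap
    rw [pentW_adj] at hax hay
    have hxx : x' = x := by
      rcases hax with h | h | h | h | h <;> rw [Sym2.eq_iff] at h
      · rcases h with ⟨-, h⟩ | ⟨h, -⟩
        · exact h
        · exact absurd h hux.ne
      · rcases h with ⟨h, -⟩ | ⟨h, -⟩
        · exact absurd h hux.ne
        · exact absurd h.symm hwu
      · rcases h with ⟨h, -⟩ | ⟨h, -⟩
        · exact absurd h.symm hwu
        · exact absurd h.symm hyu
      · rcases h with ⟨h, -⟩ | ⟨h, -⟩
        · exact absurd h.symm hyu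
        · exact absurd h huv.ne
      · rcases h with ⟨h, -⟩ | ⟨-, h⟩
        · exact absurd h huv.ne
        · exact absurd h hxv'
    have hyy : y' = y := by
      rcases hay with h | h | h | h | h <;> rw [Sym2.eq_iff] at h
      · rcases h with ⟨h, -⟩ | ⟨h, -⟩
        · exact absurd h huv.ne'
        · exact absurd h.symm hxv
      · rcases h with ⟨h, -⟩ | ⟨h, -⟩
        · exact absurd h.symm hxv
        · exact absurd h.symm hwv
      · rcases h with ⟨h, -⟩ | ⟨h, -⟩
        · exact absurd h.symm hwv
        · exact absurd h hvy.ne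
      · rcases h with ⟨h, -⟩ | ⟨-, h⟩
        · exact absurd h hvy.ne
        · exact h
      · rcases h with ⟨-, h⟩ | ⟨h, -⟩
        · exact absurd h hyu'
        · exact absurd h huv.ne'
    rw [Prod.ext_iff]
    exact ⟨hxx.symm, hyy.symm⟩
  have hsurj : ∀ c ∈ {c : G.Subgraph | IsCycleSub G 5 c ∧ s(u,v) ∈ c.edgeSet},
      ∃ p ∈ pairs G hreg u v, phi G huv p = c := by
    rintro c ⟨⟨a, w0, hc0, hl0, rfl⟩, hec⟩
    rw [Walk.edgeSet_toSubgraph] at hec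
    have hec' : s(u,v) ∈ w0.edges := hec
    have hu0 : u ∈ w0.support := w0.fst_mem_support_of_mem_edges hec'
    have hc1 : (w0.rotate u hu0).IsCycle := hc0.rotate hu0
    have hl1 : (w0.rotate u hu0).length = 5 := by
      rw [← Walk.length_edges, (Walk.rotate_edges w0 u hu0).perm.length_eq,
        Walk.length_edges, hl0]
    have he1 : s(u,v) ∈ (w0.rotate u hu0).edges := by
      rw [(Walk.rotate_edges w0 u hu0).mem_iff]; exact hec'
    have hsub : (w0.rotate u hu0).toSubgraph = w0.toSubgraph := w0.toSubgraph_rotate hu0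
    obtain ⟨x1, x2, x3, x4, h1, h2, h3, h4, h5, hw⟩ := cycle5_decomp (w0.rotate u hu0) hl1
    rw [hw] at hc1 he1 hsub
    have hnd : ([x1, x2, x3, x4, u] : List V).Nodup := by
      simpa [pentW] using hc1.support_nodup
    simp only [List.nodup_cons, List.mem_cons, List.mem_singleton, List.not_mem_nil,
      or_false, not_or, List.nodup_nil, and_true] at hnd
    obtain ⟨⟨h12, h13, h14, h1u⟩, ⟨h23, h24, h2u⟩, ⟨h34, h3u⟩, h4u, -⟩ := hnd
    rw [pentW_edges] at he1
    simp only [List.mem_cons, List.not_mem_nil, or_false] at he1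
    rcases he1 with h | h | h | h | h <;> rw [Sym2.eq_iff] at h
    · -- v = x1
      have hv : v = x1 := by
        rcases h with ⟨-, h⟩ | ⟨h, -⟩
        · exact h
        · exact absurd h h1.ne
      subst hv
      have hcond : G.Adj u x4 ∧ G.Adj v x2 ∧ ∃ w, G.Adj w x4 ∧ G.Adj w x2 :=
        ⟨h5.symm, h2, x3, h4, h3.symm⟩
      refine ⟨(x4, x2), ?_, ?_⟩
      · rw [mem_pairs]
        exact ⟨⟨h5.symm, fun hh => h14 hh.symm⟩, ⟨h2, h2u⟩, x3, h4, h3.symm⟩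
      · obtain ⟨hw1, hw2⟩ := hcond.2.2.choose_spec
        have hx3 : hcond.2.2.choose = x3 :=
          cn_unique hgirth (fun hh => h24 hh.symm) hw1 hw2 h4 h3.symm
        rw [show phi G huv (x4, x2) = (pentW hcond.1 hcond.2.2.choose_spec.1.symm
          hcond.2.2.choose_spec.2 hcond.2.1.symm huv.symm).toSubgraph from dif_pos hcond,
          ← hsub]
        apply Subgraph.ext
        · rw [pentW_verts, pentW_verts, hx3]
          ext z; simp only [Set.mem_insert_iff, Set.mem_singleton_iff]; tauto
        · ext a' b'
          rw [pentW_adj, pentW_adj, hx3]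
          constructor
          · rintro (h | h | h | h | h)
            · exact Or.inr (Or.inr (Or.inr (Or.inr (h.trans Sym2.eq_swap))))
            · exact Or.inr (Or.inr (Or.inr (Or.inl (h.trans Sym2.eq_swap))))
            · exact Or.inr (Or.inr (Or.inl (h.trans Sym2.eq_swap)))
            · exact Or.inr (Or.inl (h.trans Sym2.eq_swap))
            · exact Or.inl (h.trans Sym2.eq_swap)
          · rintro (h | h | h | h | h)
            · exact Or.inr (Or.inr (Or.inr (Or.inr (h.trans Sym2.eq_swap))))
            · exact Or.inr (Or.inr (Or.inr (Or.inl (h.trans Sym2.eq_swap))))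
            · exact Or.inr (Or.inr (Or.inl (h.trans Sym2.eq_swap)))
            · exact Or.inr (Or.inl (h.trans Sym2.eq_swap))
            · exact Or.inl (h.trans Sym2.eq_swap)
    · exact absurd h (by rintro (⟨h, -⟩ | ⟨h, -⟩); exacts [h1u h.symm, h2u h.symm])
    · exact absurd h (by rintro (⟨h, -⟩ | ⟨h, -⟩); exacts [h2u h.symm, h3u h.symm])
    · exact absurd h (by rintro (⟨h, -⟩ | ⟨h, -⟩); exacts [h3u h.symm, h4u h.symm])
    · -- v = x4
      have hv : v = x4 := by
        rcases h with ⟨h, -⟩ | ⟨-, h⟩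
        · exact absurd h.symm h4u
        · exact h
      subst hv
      have hcond : G.Adj u x1 ∧ G.Adj v x3 ∧ ∃ w, G.Adj w x1 ∧ G.Adj w x3 :=
        ⟨h1, h4.symm, x2, h2.symm, h3⟩
      refine ⟨(x1, x3), ?_, ?_⟩
      · rw [mem_pairs]
        exact ⟨⟨h1, h14⟩, ⟨h4.symm, h3u⟩, x2, h2.symm, h3⟩
      · obtain ⟨hw1, hw2⟩ := hcond.2.2.choose_spec
        have hx2 : hcond.2.2.choose = x2 := cn_unique hgirth h13 hw1 hw2 h2.symm h3
        rw [show phi G huv (x1, x3) = (pentW hcond.1 hcond.2.2.choose_spec.1.symm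
          hcond.2.2.choose_spec.2 hcond.2.1.symm huv.symm).toSubgraph from dif_pos hcond,
          ← hsub]
        apply Subgraph.ext
        · rw [pentW_verts, pentW_verts, hx2]
        · ext a' b'
          rw [pentW_adj, pentW_adj, hx2]
  have himg : (phi G huv) '' ↑(pairs G hreg u v)
      = {c : G.Subgraph | IsCycleSub G 5 c ∧ s(u,v) ∈ c.edgeSet} := by
    apply Set.ext
    intro c
    constructor
    · rintro ⟨p, hp, rfl⟩
      exact hmaps p hp
    · intro hc
      obtain ⟨p, hp, he⟩ := hsurj c hc
      exact ⟨p, hp, he⟩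
  calc (pairs G hreg u v).card = (↑(pairs G hreg u v) : Set (V × V)).ncard :=
        (Set.ncard_coe_finset _).symm
    _ = ((phi G huv) '' ↑(pairs G hreg u v)).ncard := (Set.ncard_image_of_injOn hinj).symm
    _ = 8 := by rw [himg]; exact h8

lemma branch_disjoint (hgirth : G.girth = 5) {u x y t : V} (hux : G.Adj u x)
    (huy : G.Adj u y) (hxy : x ≠ y) (htx : G.Adj x t) (hty : G.Adj y t) (htu : t ≠ u) :
    False :=
  no4 hgirth hux htx hty.symm huy.symm (fun h => htu h.symm) hxy

lemma branch_not_nbu (hgirth : G.girth = 5) {u x t : V} (hux : G.Adj u x)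
    (htx : G.Adj x t) (hut : G.Adj u t) : False :=
  no3 hgirth hux htx hut.symm

lemma card_eq_four {s : Finset V} (h : s.card = 4) :
    ∃ a b c d : V, a ≠ b ∧ a ≠ c ∧ a ≠ d ∧ b ≠ c ∧ b ≠ d ∧ c ≠ d ∧ s = {a, b, c, d} := by
  obtain ⟨a, ha⟩ := Finset.card_pos.mp (by omega : 0 < s.card)
  have h3 : (s.erase a).card = 3 := by rw [Finset.card_erase_of_mem ha, h]
  obtain ⟨b, c, d, hbc, hbd, hcd, he⟩ := Finset.card_eq_three.mp h3
  refine ⟨a, b, c, d, ?_, ?_, ?_, hbc, hbd, hcd, ?_⟩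
  · intro hh; have : b ∈ s.erase a := by rw [he]; simp
    exact (Finset.ne_of_mem_erase this) hh.symm
  · intro hh; have : c ∈ s.erase a := by rw [he]; simp
    exact (Finset.ne_of_mem_erase this) hh.symm
  · intro hh; have : d ∈ s.erase a := by rw [he]; simp
    exact (Finset.ne_of_mem_erase this) hh.symm
  · rw [← Finset.insert_erase ha, he]

/-- count of vertices in branch of `y` having a neighbor in branch of `x` (branches at `u`) -/
noncomputable def fc (G : SimpleGraph V) (hreg : ∀ x : V, (G.neighborSet x).ncard = 4)
    (u x y : V) : ℕ :=
  (((Nb G hreg y).erase u).filter (fun t => ∃ p ∈ (Nb G hreg x).erase u, G.Adj p t)).card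

lemma card_branch {hreg : ∀ x : V, (G.neighborSet x).ncard = 4} {u x : V} (hux : G.Adj u x) :
    ((Nb G hreg x).erase u).card = 3 := by
  rw [Finset.card_erase_of_mem (mem_Nb.mpr hux.symm), card_Nb]

lemma fc_le {hreg : ∀ x : V, (G.neighborSet x).ncard = 4} {u x y : V} (huy : G.Adj u y) :
    fc G hreg u x y ≤ 3 := by
  calc fc G hreg u x y ≤ ((Nb G hreg y).erase u).card := Finset.card_filter_le _ _
    _ = 3 := card_branch huy

lemma row (hreg : ∀ x : V, (G.neighborSet x).ncard = 4) (hgirth : G.girth = 5)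
    (hlam : ∀ e ∈ G.edgeSet, {c : G.Subgraph | IsCycleSub G 5 c ∧ e ∈ c.edgeSet}.ncard = 8)
    {u x : V} (hux : G.Adj u x) :
    ∑ s ∈ (Nb G hreg u).erase x, fc G hreg u s x = 8 := by
  have h8 := card_pairs hreg hgirth hlam hux
  rw [pairs, card_filter_product] at h8
  rw [← h8]
  apply Finset.sum_congr rfl
  intro s hs
  have hus : G.Adj u s := mem_Nb.mp (Finset.mem_of_mem_erase hs)
  unfold fc
  congr 1
  apply Finset.filter_congr
  intro t ht
  have htx : G.Adj x t := mem_Nb.mp (Finset.mem_of_mem_erase ht)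
  simp only [eq_iff_iff]
  constructor
  · rintro ⟨p, hp, hpt⟩
    exact ⟨p, (mem_Nb.mp (Finset.mem_of_mem_erase hp)).symm, hpt⟩
  · rintro ⟨w, hws, hwt⟩
    refine ⟨w, Finset.mem_erase.mpr ⟨?_, mem_Nb.mpr hws.symm⟩, hwt⟩
    rintro rfl
    exact branch_not_nbu hgirth hux htx hwt

lemma fsym (hreg : ∀ x : V, (G.neighborSet x).ncard = 4) (hgirth : G.girth = 5)
    {u x y : V} (hux : G.Adj u x) (huy : G.Adj u y) (hxy : x ≠ y) :
    fc G hreg u x y = fc G hreg u y x := by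
  unfold fc
  apply Finset.card_bij (i := fun t ht => (Finset.mem_filter.mp ht).2.choose)
  · intro t ht
    obtain ⟨ht1, ht2⟩ := Finset.mem_filter.mp ht
    obtain ⟨hp, hpt⟩ := ht2.choose_spec
    exact Finset.mem_filter.mpr ⟨hp, t, ht1, hpt.symm⟩
  · intro t1 ht1 t2 ht2 heq
    obtain ⟨ht11, ht12⟩ := Finset.mem_filter.mp ht1
    obtain ⟨hp1, hpt1⟩ := ht12.choose_spec
    obtain ⟨ht21, ht22⟩ := Finset.mem_filter.mp ht2
    obtain ⟨hp2, hpt2⟩ := ht22.choose_spec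
    rw [heq] at hpt1
    have hyadj1 : G.Adj y t1 := mem_Nb.mp (Finset.mem_of_mem_erase ht11)
    have hyadj2 : G.Adj y t2 := mem_Nb.mp (Finset.mem_of_mem_erase ht21)
    have hyq : y ≠ ht22.choose := by
      intro hh
      exact branch_not_nbu hgirth hux (mem_Nb.mp (Finset.mem_of_mem_erase hp2)) (hh ▸ huy)
    exact cn_unique hgirth hyq hyadj1.symm hpt1.symm hyadj2.symm hpt2.symm
  · intro p hp
    rw [Finset.mem_filter] at hp
    obtain ⟨hp1, t, ht, hpt⟩ := hp
    have hq : ∃ q ∈ (Nb G hreg x).erase u, G.Adj q t := ⟨p, hp1, hpt.symm⟩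
    have htmem : t ∈ Finset.filter (fun t => ∃ q ∈ (Nb G hreg x).erase u, G.Adj q t)
        ((Nb G hreg y).erase u) := Finset.mem_filter.mpr ⟨ht, hq⟩
    refine ⟨t, htmem, ?_⟩
    obtain ⟨hp2, hpt2⟩ := (Finset.mem_filter.mp htmem).2.choose_spec
    have hyt : G.Adj y t := mem_Nb.mp (Finset.mem_of_mem_erase ht)
    have hty : t ≠ x := by
      rintro rfl
      exact branch_not_nbu hgirth huy hyt hux
    exact cn_unique hgirth hty hpt2 (mem_Nb.mp (Finset.mem_of_mem_erase hp2)).symm hpt.symm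
      (mem_Nb.mp (Finset.mem_of_mem_erase hp1)).symm

noncomputable def BB (G : SimpleGraph V) (hreg : ∀ x : V, (G.neighborSet x).ncard = 4)
    (u : V) : Finset V :=
  insert u ((Nb G hreg u) ∪ (Nb G hreg u).biUnion (fun x => (Nb G hreg x).erase u))

lemma mem_BB {hreg : ∀ x : V, (G.neighborSet x).ncard = 4} {u y : V} :
    y ∈ BB G hreg u ↔ y = u ∨ y ∈ Nb G hreg u ∨ ∃ x ∈ Nb G hreg u, y ∈ (Nb G hreg x).erase u := by
  simp [BB]

lemma full_of_fc3 {hreg : ∀ x : V, (G.neighborSet x).ncard = 4} {u x y : V}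
    (huy : G.Adj u y) (h3 : fc G hreg u x y = 3) :
    ∀ t ∈ (Nb G hreg y).erase u, ∃ p ∈ (Nb G hreg x).erase u, G.Adj p t := by
  have heq : Finset.filter (fun t => ∃ p ∈ (Nb G hreg x).erase u, G.Adj p t)
      ((Nb G hreg y).erase u) = (Nb G hreg y).erase u := by
    apply Finset.eq_of_subset_of_card_le (Finset.filter_subset _ _)
    rw [card_branch huy]
    exact le_of_eq h3.symm
  intro t ht
  rw [← heq] at ht
  exact (Finset.mem_filter.mp ht).2

lemma special_of_fc2 {hreg : ∀ x : V, (G.neighborSet x).ncard = 4} {u x y : V}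
    (huy : G.Adj u y) (h2 : fc G hreg u x y = 2) :
    ∃ w ∈ (Nb G hreg y).erase u, (¬ ∃ p ∈ (Nb G hreg x).erase u, G.Adj p w) ∧
      ∀ t ∈ (Nb G hreg y).erase u, t ≠ w → ∃ p ∈ (Nb G hreg x).erase u, G.Adj p t := by
  unfold fc at h2
  set F := Finset.filter (fun t => ∃ p ∈ (Nb G hreg x).erase u, G.Adj p t)
      ((Nb G hreg y).erase u) with hF
  have hsub : F ⊆ (Nb G hreg y).erase u := Finset.filter_subset _ _
  have hc1 : ((Nb G hreg y).erase u \ F).card = 1 := by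
    rw [Finset.card_sdiff_of_subset hsub, card_branch huy, h2]
  obtain ⟨w, hw⟩ := Finset.card_eq_one.mp hc1
  have hwmem : w ∈ (Nb G hreg y).erase u \ F := by rw [hw]; simp
  obtain ⟨hw1, hw2⟩ := Finset.mem_sdiff.mp hwmem
  refine ⟨w, hw1, ?_, ?_⟩
  · intro hex
    exact hw2 (Finset.mem_filter.mpr ⟨hw1, hex⟩)
  · intro t ht htw
    by_contra hno
    have : t ∈ (Nb G hreg y).erase u \ F := by
      rw [Finset.mem_sdiff]
      exact ⟨ht, fun hh => hno (Finset.mem_filter.mp hh).2⟩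
    rw [hw] at this
    exact htw (Finset.mem_singleton.mp this)

lemma engine (hreg : ∀ x : V, (G.neighborSet x).ncard = 4) (hgirth : G.girth = 5)
    {u x1 x3 x4 p : V} (hu1 : G.Adj u x1) (hu3 : G.Adj u x3) (hu4 : G.Adj u x4)
    (h34 : x3 ≠ x4)
    (hfull3 : ∀ t ∈ (Nb G hreg x1).erase u, ∃ q ∈ (Nb G hreg x3).erase u, G.Adj q t)
    (hfull4 : ∀ t ∈ (Nb G hreg x1).erase u, ∃ q ∈ (Nb G hreg x4).erase u, G.Adj q t)
    (hp : p ∈ (Nb G hreg x1).erase u) :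
    ∃ pc pd y0, pc ∈ (Nb G hreg x3).erase u ∧ pd ∈ (Nb G hreg x4).erase u ∧
      y0 ≠ x1 ∧ y0 ≠ pc ∧ y0 ≠ pd ∧
      (∀ y, G.Adj p y ↔ y = x1 ∨ y = pc ∨ y = pd ∨ y = y0) := by
  obtain ⟨pc, hpc, hpcp⟩ := hfull3 p hp
  obtain ⟨pd, hpd, hpdp⟩ := hfull4 p hp
  have hx1p : G.Adj x1 p := mem_Nb.mp (Finset.mem_of_mem_erase hp)
  have hx3pc : G.Adj x3 pc := mem_Nb.mp (Finset.mem_of_mem_erase hpc)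
  have hx4pd : G.Adj x4 pd := mem_Nb.mp (Finset.mem_of_mem_erase hpd)
  have hx1pc : x1 ≠ pc := by
    rintro rfl
    exact branch_not_nbu hgirth hu3 hx3pc hu1
  have hx1pd : x1 ≠ pd := by
    rintro rfl
    exact branch_not_nbu hgirth hu4 hx4pd hu1
  have hpcpd : pc ≠ pd := by
    rintro rfl
    exact branch_disjoint hgirth hu3 hu4 h34 hx3pc hx4pd (Finset.ne_of_mem_erase hpc)
  have hTsub : ({x1, pc, pd} : Finset V) ⊆ Nb G hreg p := by
    intro y hy
    simp only [Finset.mem_insert, Finset.mem_singleton] at hy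
    rcases hy with rfl | rfl | rfl
    · exact mem_Nb.mpr hx1p.symm
    · exact mem_Nb.mpr hpcp.symm
    · exact mem_Nb.mpr hpdp.symm
  have hTcard : ({x1, pc, pd} : Finset V).card = 3 := by
    rw [Finset.card_insert_of_notMem (by simp [hx1pc, hx1pd]),
      Finset.card_insert_of_notMem (by simp [hpcpd]), Finset.card_singleton]
  have hc1 : (Nb G hreg p \ {x1, pc, pd}).card = 1 := by
    rw [Finset.card_sdiff_of_subset hTsub, hTcard, card_Nb]
  obtain ⟨y0, hy0⟩ := Finset.card_eq_one.mp hc1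
  have hy0mem : y0 ∈ Nb G hreg p \ {x1, pc, pd} := by rw [hy0]; simp
  obtain ⟨hy01, hy02⟩ := Finset.mem_sdiff.mp hy0mem
  simp only [Finset.mem_insert, Finset.mem_singleton, not_or] at hy02
  obtain ⟨hne1, hne2, hne3⟩ := hy02
  refine ⟨pc, pd, y0, hpc, hpd, hne1, hne2, hne3, ?_⟩
  intro y
  rw [← mem_Nb (hreg := hreg)]
  rw [← Finset.union_sdiff_of_subset hTsub, hy0]
  simp only [Finset.mem_union, Finset.mem_insert, Finset.mem_singleton]
  tauto

lemma nbrs_in_B (hreg : ∀ x : V, (G.neighborSet x).ncard = 4) (hgirth : G.girth = 5)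
    {u x1 x2 x3 x4 p : V} (hu1 : G.Adj u x1) (hu2 : G.Adj u x2) (hu3 : G.Adj u x3)
    (hu4 : G.Adj u x4) (h23 : x2 ≠ x3) (h24 : x2 ≠ x4) (h34 : x3 ≠ x4)
    (hfull3 : ∀ t ∈ (Nb G hreg x1).erase u, ∃ q ∈ (Nb G hreg x3).erase u, G.Adj q t)
    (hfull4 : ∀ t ∈ (Nb G hreg x1).erase u, ∃ q ∈ (Nb G hreg x4).erase u, G.Adj q t)
    (hp : p ∈ (Nb G hreg x1).erase u)
    (hq : ∃ q ∈ (Nb G hreg x2).erase u, G.Adj q p) :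
    ∀ y, G.Adj p y → y ∈ BB G hreg u := by
  obtain ⟨pc, pd, y0, hpc, hpd, hne1, hne2, hne3, hiff⟩ :=
    engine hreg hgirth hu1 hu3 hu4 h34 hfull3 hfull4 hp
  obtain ⟨q, hqm, hqp⟩ := hq
  have hx2q : G.Adj x2 q := mem_Nb.mp (Finset.mem_of_mem_erase hqm)
  have hqx1 : q ≠ x1 := by
    rintro rfl
    exact branch_not_nbu hgirth hu2 hx2q hu1
  have hqpc : q ≠ pc := by
    rintro rfl
    exact branch_disjoint hgirth hu2 hu3 h23 hx2q (mem_Nb.mp (Finset.mem_of_mem_erase hpc))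
      (Finset.ne_of_mem_erase hqm)
  have hqpd : q ≠ pd := by
    rintro rfl
    exact branch_disjoint hgirth hu2 hu4 h24 hx2q (mem_Nb.mp (Finset.mem_of_mem_erase hpd))
      (Finset.ne_of_mem_erase hqm)
  have hy0q : y0 = q := by
    have := (hiff q).mp hqp.symm
    rcases this with rfl | rfl | rfl | rfl
    · exact absurd rfl hqx1
    · exact absurd rfl hqpc
    · exact absurd rfl hqpd
    · rfl
  intro y hy
  rcases (hiff y).mp hy with rfl | rfl | rfl | rfl
  · exact mem_BB.mpr (Or.inr (Or.inl (mem_Nb.mpr hu1)))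
  · exact mem_BB.mpr (Or.inr (Or.inr ⟨x3, mem_Nb.mpr hu3, hpc⟩))
  · exact mem_BB.mpr (Or.inr (Or.inr ⟨x4, mem_Nb.mpr hu4, hpd⟩))
  · rw [hy0q]
    exact mem_BB.mpr (Or.inr (Or.inr ⟨x2, mem_Nb.mpr hu2, hqm⟩))

lemma special_out (hreg : ∀ x : V, (G.neighborSet x).ncard = 4) (hgirth : G.girth = 5)
    {u x1 x2 x3 x4 p : V} (hu1 : G.Adj u x1) (hu2 : G.Adj u x2) (hu3 : G.Adj u x3)
    (hu4 : G.Adj u x4) (h12 : x1 ≠ x2) (h13 : x1 ≠ x3) (h14 : x1 ≠ x4) (h34 : x3 ≠ x4)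
    (hN : Nb G hreg u = {x1, x2, x3, x4})
    (hfull3 : ∀ t ∈ (Nb G hreg x1).erase u, ∃ q ∈ (Nb G hreg x3).erase u, G.Adj q t)
    (hfull4 : ∀ t ∈ (Nb G hreg x1).erase u, ∃ q ∈ (Nb G hreg x4).erase u, G.Adj q t)
    (hp : p ∈ (Nb G hreg x1).erase u)
    (hnq : ¬ ∃ q ∈ (Nb G hreg x2).erase u, G.Adj q p) :
    ∃ z, G.Adj p z ∧ z ∉ BB G hreg u ∧ ∀ y, G.Adj p y → y ∈ BB G hreg u ∨ y = z := by
  obtain ⟨pc, pd, y0, hpc, hpd, hne1, hne2, hne3, hiff⟩ :=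
    engine hreg hgirth hu1 hu3 hu4 h34 hfull3 hfull4 hp
  have hx1p : G.Adj x1 p := mem_Nb.mp (Finset.mem_of_mem_erase hp)
  have hpu : p ≠ u := Finset.ne_of_mem_erase hp
  have hpy0 : G.Adj p y0 := (hiff y0).mpr (by tauto)
  refine ⟨y0, hpy0, ?_, ?_⟩
  · intro hmem
    rcases mem_BB.mp hmem with rfl | hmem | ⟨x, hx, hmem⟩
    · exact branch_not_nbu hgirth hu1 hx1p hpy0.symm
    · rw [hN] at hmem
      simp only [Finset.mem_insert, Finset.mem_singleton] at hmem
      rcases hmem with rfl | rfl | rfl | rfl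
      · exact hne1 rfl
      · exact branch_disjoint hgirth hu1 hu2 h12 hx1p hpy0.symm hpu
      · exact branch_disjoint hgirth hu1 hu3 h13 hx1p hpy0.symm hpu
      · exact branch_disjoint hgirth hu1 hu4 h14 hx1p hpy0.symm hpu
    · rw [hN] at hx
      simp only [Finset.mem_insert, Finset.mem_singleton] at hx
      have hadjy0 : ∀ x' : V, y0 ∈ (Nb G hreg x').erase u → G.Adj x' y0 :=
        fun x' hh => mem_Nb.mp (Finset.mem_of_mem_erase hh)
      rcases hx with rfl | rfl | rfl | rfl
      · exact no3 hgirth hx1p hpy0 (hadjy0 _ hmem).symm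
      · exact hnq ⟨y0, hmem, hpy0.symm⟩
      · refine hne2 (cn_unique hgirth (y := p) ?_ (hadjy0 _ hmem).symm hpy0.symm
          (mem_Nb.mp (Finset.mem_of_mem_erase hpc)).symm ((hiff pc).mpr (by tauto)).symm)
        rintro rfl
        exact branch_not_nbu hgirth hu1 hx1p hu3
      · refine hne3 (cn_unique hgirth (y := p) ?_ (hadjy0 _ hmem).symm hpy0.symm
          (mem_Nb.mp (Finset.mem_of_mem_erase hpd)).symm ((hiff pd).mpr (by tauto)).symm)
        rintro rfl
        exact branch_not_nbu hgirth hu1 hx1p hu4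
  · intro y hy
    rcases (hiff y).mp hy with rfl | rfl | rfl | rfl
    · exact Or.inl (mem_BB.mpr (Or.inr (Or.inl (mem_Nb.mpr hu1))))
    · exact Or.inl (mem_BB.mpr (Or.inr (Or.inr ⟨x3, mem_Nb.mpr hu3, hpc⟩)))
    · exact Or.inl (mem_BB.mpr (Or.inr (Or.inr ⟨x4, mem_Nb.mpr hu4, hpd⟩)))
    · exact Or.inr rfl

noncomputable def pentSub (G : SimpleGraph V) (q : V × V × V × V × V) : G.Subgraph :=
  if h : G.Adj q.1 q.2.1 ∧ G.Adj q.2.1 q.2.2.1 ∧ G.Adj q.2.2.1 q.2.2.2.1 ∧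
      G.Adj q.2.2.2.1 q.2.2.2.2 ∧ G.Adj q.2.2.2.2 q.1 then
    (pentW h.1 h.2.1 h.2.2.1 h.2.2.2.1 h.2.2.2.2).toSubgraph
  else ⊥

lemma pentSub_eq {q1 q2 q3 q4 q5 : V} (h1 : G.Adj q1 q2) (h2 : G.Adj q2 q3)
    (h3 : G.Adj q3 q4) (h4 : G.Adj q4 q5) (h5 : G.Adj q5 q1) :
    pentSub G (q1, q2, q3, q4, q5) = (pentW h1 h2 h3 h4 h5).toSubgraph := by
  rw [pentSub, dif_pos ⟨h1, h2, h3, h4, h5⟩]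

lemma cycle_in_S {S : Finset V} (hclo : ∀ x ∈ S, ∀ y, G.Adj x y → y ∈ S) {c : G.Subgraph}
    (hcyc : IsCycleSub G 5 c) {x0 y0 : V} (hx0 : x0 ∈ S) (he : s(x0, y0) ∈ c.edgeSet) :
    c ∈ ((S ×ˢ S ×ˢ S ×ˢ S ×ˢ S).image (pentSub G)).filter (fun c => IsCycleSub G 5 c) := by
  rw [Finset.mem_filter]
  refine ⟨?_, hcyc⟩
  obtain ⟨a, w0, hc, hl, rfl⟩ := hcyc
  rw [Walk.edgeSet_toSubgraph] at he
  have he' : s(x0, y0) ∈ w0.edges := he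
  have hx0s : x0 ∈ w0.support := w0.fst_mem_support_of_mem_edges he'
  have hl1 : (w0.rotate x0 hx0s).length = 5 := by
    rw [← Walk.length_edges, (Walk.rotate_edges w0 x0 hx0s).perm.length_eq, Walk.length_edges, hl]
  have hsub : (w0.rotate x0 hx0s).toSubgraph = w0.toSubgraph := w0.toSubgraph_rotate hx0s
  obtain ⟨x1, x2, x3, x4, h1, h2, h3, h4, h5, hw⟩ := cycle5_decomp (w0.rotate x0 hx0s) hl1
  have hx1 : x1 ∈ S := hclo x0 hx0 x1 h1
  have hx2 : x2 ∈ S := hclo x1 hx1 x2 h2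
  have hx3 : x3 ∈ S := hclo x2 hx2 x3 h3
  have hx4 : x4 ∈ S := hclo x3 hx3 x4 h4
  rw [Finset.mem_image]
  refine ⟨(x0, x1, x2, x3, x4), by simp [Finset.mem_product, hx0, hx1, hx2, hx3, hx4], ?_⟩
  rw [pentSub_eq h1 h2 h3 h4 h5, ← hw, hsub]

lemma ten_pairs (hgirth : G.girth = 5) {S : Finset V} {c : G.Subgraph}
    (hcyc : IsCycleSub G 5 c) (hverts : c.verts ⊆ ↑S) :
    (((S ×ˢ S).filter (fun p => G.Adj p.1 p.2)).filter
      (fun p => s(p.1, p.2) ∈ c.edgeSet)).card = 10 := by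
  obtain ⟨a, w0, hc, hl, rfl⟩ := hcyc
  obtain ⟨x1, x2, x3, x4, h1, h2, h3, h4, h5, hw⟩ := cycle5_decomp w0 hl
  subst hw
  have hnd : ([x1, x2, x3, x4, a] : List V).Nodup := by
    simpa [pentW] using hc.support_nodup
  simp only [List.nodup_cons, List.mem_cons, List.mem_singleton, List.not_mem_nil,
    or_false, not_or, List.nodup_nil, and_true] at hnd
  obtain ⟨⟨h12, h13, h14, h1a⟩, ⟨h23, h24, h2a⟩, ⟨h34, h3a⟩, h4a, -⟩ := hnd
  have hva : a ∈ S := hverts (Walk.start_mem_verts_toSubgraph _)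
  have hv : ∀ y, y ∈ ({x1, x2, x3, x4} : Finset V) → y ∈ S := by
    intro y hy
    apply hverts
    rw [Walk.mem_verts_toSubgraph]
    simp only [Finset.mem_insert, Finset.mem_singleton] at hy
    simp [pentW]
    tauto
  have hv1 : x1 ∈ S := hv x1 (by simp)
  have hv2 : x2 ∈ S := hv x2 (by simp)
  have hv3 : x3 ∈ S := hv x3 (by simp)
  have hv4 : x4 ∈ S := hv x4 (by simp)
  have hfeq : ((S ×ˢ S).filter (fun p => G.Adj p.1 p.2)).filter
      (fun p => s(p.1, p.2) ∈ (pentW h1 h2 h3 h4 h5).toSubgraph.edgeSet) =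
      ([(a,x1), (x1,a), (x1,x2), (x2,x1), (x2,x3), (x3,x2), (x3,x4), (x4,x3), (x4,a),
        (a,x4)] : List (V × V)).toFinset := by
    ext ⟨y1, y2⟩
    simp only [Finset.mem_filter, Finset.mem_product, List.mem_toFinset, List.mem_cons,
      List.not_mem_nil, or_false, Walk.edgeSet_toSubgraph, Set.mem_setOf_eq]
    constructor
    · rintro ⟨⟨⟨-, -⟩, -⟩, hmem⟩
      rw [Walk.mem_edgeSet, pentW_edges] at hmem
      simp only [List.mem_cons, List.not_mem_nil, or_false] at hmem
      rcases hmem with h | h | h | h | h <;> rw [Sym2.eq_iff] at h <;>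
        rcases h with ⟨rfl, rfl⟩ | ⟨rfl, rfl⟩ <;> tauto
    · intro hmem
      rcases hmem with h | h | h | h | h | h | h | h | h | h <;>
        (simp only [Prod.mk.injEq] at h; rw [h.1, h.2]) <;>
        refine ⟨⟨⟨by assumption, by assumption⟩, by first
          | exact h1 | exact h1.symm | exact h2 | exact h2.symm | exact h3 | exact h3.symm
          | exact h4 | exact h4.symm | exact h5 | exact h5.symm⟩, ?_⟩ <;>
        · rw [Walk.mem_edgeSet, pentW_edges]
          simp [Sym2.eq_swap]
  rw [hfeq]
  rw [List.toFinset_card_of_nodup]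
  · rfl
  · simp only [List.nodup_cons, List.mem_cons, List.not_mem_nil, or_false, not_or,
      Prod.mk.injEq, not_and, List.nodup_nil, and_true]
    repeat' apply And.intro
    all_goals first
      | exact not_false
      | tauto
      | (intro h; first | (subst h; tauto) | tauto)

lemma step5 (hreg : ∀ x : V, (G.neighborSet x).ncard = 4) (hgirth : G.girth = 5)
    (hlam : ∀ e ∈ G.edgeSet, {c : G.Subgraph | IsCycleSub G 5 c ∧ e ∈ c.edgeSet}.ncard = 8)
    {u x1 x2 x3 x4 w1 w2 w3 w4 z1 z2 z3 z4 : V}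
    (h12 : x1 ≠ x2) (h13 : x1 ≠ x3) (h14 : x1 ≠ x4) (h23 : x2 ≠ x3) (h24 : x2 ≠ x4)
    (h34 : x3 ≠ x4)
    (hu1 : G.Adj u x1) (hu2 : G.Adj u x2) (hu3 : G.Adj u x3) (hu4 : G.Adj u x4)
    (hN : Nb G hreg u = {x1, x2, x3, x4})
    (hf13 : ∀ t ∈ (Nb G hreg x1).erase u, ∃ q ∈ (Nb G hreg x3).erase u, G.Adj q t)
    (hf14 : ∀ t ∈ (Nb G hreg x1).erase u, ∃ q ∈ (Nb G hreg x4).erase u, G.Adj q t)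
    (hf23 : ∀ t ∈ (Nb G hreg x2).erase u, ∃ q ∈ (Nb G hreg x3).erase u, G.Adj q t)
    (hf24 : ∀ t ∈ (Nb G hreg x2).erase u, ∃ q ∈ (Nb G hreg x4).erase u, G.Adj q t)
    (hf31 : ∀ t ∈ (Nb G hreg x3).erase u, ∃ q ∈ (Nb G hreg x1).erase u, G.Adj q t)
    (hf32 : ∀ t ∈ (Nb G hreg x3).erase u, ∃ q ∈ (Nb G hreg x2).erase u, G.Adj q t)
    (hf41 : ∀ t ∈ (Nb G hreg x4).erase u, ∃ q ∈ (Nb G hreg x1).erase u, G.Adj q t)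
    (hf42 : ∀ t ∈ (Nb G hreg x4).erase u, ∃ q ∈ (Nb G hreg x2).erase u, G.Adj q t)
    (hw1A : w1 ∈ (Nb G hreg x1).erase u)
    (hw1U : ∀ t ∈ (Nb G hreg x1).erase u, t ≠ w1 → ∃ q ∈ (Nb G hreg x2).erase u, G.Adj q t)
    (hw2A : w2 ∈ (Nb G hreg x2).erase u)
    (hw2U : ∀ t ∈ (Nb G hreg x2).erase u, t ≠ w2 → ∃ q ∈ (Nb G hreg x1).erase u, G.Adj q t)
    (hw3A : w3 ∈ (Nb G hreg x3).erase u)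
    (hw3U : ∀ t ∈ (Nb G hreg x3).erase u, t ≠ w3 → ∃ q ∈ (Nb G hreg x4).erase u, G.Adj q t)
    (hw4A : w4 ∈ (Nb G hreg x4).erase u)
    (hw4U : ∀ t ∈ (Nb G hreg x4).erase u, t ≠ w4 → ∃ q ∈ (Nb G hreg x3).erase u, G.Adj q t)
    (hz1 : G.Adj w1 z1) (hz1out : z1 ∉ BB G hreg u)
    (hz2 : ∀ y, G.Adj w2 y → y ∈ BB G hreg u ∨ y = z2)
    (hz3 : ∀ y, G.Adj w3 y → y ∈ BB G hreg u ∨ y = z3)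
    (hz4 : ∀ y, G.Adj w4 y → y ∈ BB G hreg u ∨ y = z4) :
    (z1 = z2 ∧ z1 = z3) ∨ (z1 = z2 ∧ z1 = z4) ∨ (z1 = z3 ∧ z1 = z4) := by
  have hx1w1 : G.Adj x1 w1 := mem_Nb.mp (Finset.mem_of_mem_erase hw1A)
  have hw1u : w1 ≠ u := Finset.ne_of_mem_erase hw1A
  have hBu : u ∈ BB G hreg u := mem_BB.mpr (Or.inl rfl)
  have hz1u : z1 ≠ u := fun hh => hz1out (hh ▸ hBu)
  have hz1x1 : z1 ≠ x1 := fun hh =>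
    hz1out (hh ▸ mem_BB.mpr (Or.inr (Or.inl (mem_Nb.mpr hu1))))
  have hcard2 : (((Nb G hreg x1).erase u).erase w1).card = 2 := by
    rw [Finset.card_erase_of_mem hw1A, card_branch hu1]
  obtain ⟨p1, p2, hp12, hpe⟩ := Finset.card_eq_two.mp hcard2
  have hp1e : p1 ∈ ((Nb G hreg x1).erase u).erase w1 := by rw [hpe]; simp
  have hp2e : p2 ∈ ((Nb G hreg x1).erase u).erase w1 := by rw [hpe]; simp
  have hp1 : p1 ∈ (Nb G hreg x1).erase u := Finset.mem_of_mem_erase hp1e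
  have hp2 : p2 ∈ (Nb G hreg x1).erase u := Finset.mem_of_mem_erase hp2e
  have hp1w : p1 ≠ w1 := Finset.ne_of_mem_erase hp1e
  have hp2w : p2 ≠ w1 := Finset.ne_of_mem_erase hp2e
  have hcp := card_pairs hreg hgirth hlam hx1w1
  have hmemP : (u, z1) ∈ ((Nb G hreg x1).erase w1) ×ˢ ((Nb G hreg w1).erase x1) := by
    rw [Finset.mem_product]
    exact ⟨Finset.mem_erase.mpr ⟨Ne.symm hw1u, mem_Nb.mpr hu1.symm⟩,
      Finset.mem_erase.mpr ⟨hz1x1, mem_Nb.mpr hz1⟩⟩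
  have hP9 : pairs G hreg x1 w1 ⊆
      ((((Nb G hreg x1).erase w1) ×ˢ ((Nb G hreg w1).erase x1)).erase (u, z1)) := by
    intro p hp
    rw [Finset.mem_erase]
    refine ⟨?_, Finset.mem_of_mem_filter p hp⟩
    rintro rfl
    obtain ⟨q, hqu, hqz⟩ := (Finset.mem_filter.mp hp).2
    have hqN : q ∈ Nb G hreg u := mem_Nb.mpr hqu.symm
    rw [hN] at hqN
    simp only [Finset.mem_insert, Finset.mem_singleton] at hqN
    rcases hqN with rfl | rfl | rfl | rfl <;>
      exact hz1out (mem_BB.mpr (Or.inr (Or.inr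
        ⟨q, by rw [hN]; simp, Finset.mem_erase.mpr ⟨hz1u, mem_Nb.mpr hqz⟩⟩)))
  have hPcard : (((((Nb G hreg x1).erase w1) ×ˢ ((Nb G hreg w1).erase x1)).erase (u, z1))).card
      = 8 := by
    rw [Finset.card_erase_of_mem hmemP, Finset.card_product,
      Finset.card_erase_of_mem (mem_Nb.mpr hx1w1),
      Finset.card_erase_of_mem (mem_Nb.mpr hx1w1.symm), card_Nb, card_Nb]
  have hPeq : pairs G hreg x1 w1 =
      ((((Nb G hreg x1).erase w1) ×ˢ ((Nb G hreg w1).erase x1)).erase (u, z1)) :=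
    Finset.eq_of_subset_of_card_le hP9 (by rw [hPcard, hcp])
  have hR : ∀ p ∈ (Nb G hreg x1).erase u, p ≠ w1 →
      (z1 = z2 ∧ G.Adj w2 p) ∨ (z1 = z3 ∧ G.Adj w3 p) ∨ (z1 = z4 ∧ G.Adj w4 p) := by
    intro p hp hpw
    have hx1p : G.Adj x1 p := mem_Nb.mp (Finset.mem_of_mem_erase hp)
    have hpu : p ≠ u := Finset.ne_of_mem_erase hp
    have hpmem : (p, z1) ∈ pairs G hreg x1 w1 := by
      rw [hPeq, Finset.mem_erase, Finset.mem_product]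
      refine ⟨?_, Finset.mem_erase.mpr ⟨hpw, mem_Nb.mpr hx1p⟩,
        Finset.mem_erase.mpr ⟨hz1x1, mem_Nb.mpr hz1⟩⟩
      intro hh
      exact hpu (congrArg Prod.fst hh)
    obtain ⟨q, hqp0, hqz0⟩ := (Finset.mem_filter.mp hpmem).2
    have hqp : G.Adj q p := hqp0
    have hqz : G.Adj q z1 := hqz0
    have hqBB : q ∈ BB G hreg u :=
      nbrs_in_B hreg hgirth hu1 hu2 hu3 hu4 h23 h24 h34 hf13 hf14 hp
        (hw1U p hp hpw) q hqp.symm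
    rcases mem_BB.mp hqBB with rfl | hqN | ⟨x, hx, hqA⟩
    · exact absurd (mem_BB.mpr (Or.inr (Or.inl (mem_Nb.mpr hqz)))) hz1out
    · rw [hN] at hqN
      simp only [Finset.mem_insert, Finset.mem_singleton] at hqN
      rcases hqN with rfl | rfl | rfl | rfl <;>
        exact absurd (mem_BB.mpr (Or.inr (Or.inr
          ⟨q, by rw [hN]; simp, Finset.mem_erase.mpr ⟨hz1u, mem_Nb.mpr hqz⟩⟩))) hz1out
    · rw [hN] at hx
      simp only [Finset.mem_insert, Finset.mem_singleton] at hx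
      rcases hx with rfl | rfl | rfl | rfl
      · exact (no3 hgirth (mem_Nb.mp (Finset.mem_of_mem_erase hqA)) hqp hx1p.symm).elim
      · by_cases hqw : q = w2
        · subst hqw
          rcases hz2 z1 hqz with hbb | hzz
          · exact absurd hbb hz1out
          · exact Or.inl ⟨hzz, hqp⟩
        · exact absurd (nbrs_in_B hreg hgirth hu2 hu1 hu3 hu4 h13 h14 h34 hf23 hf24 hqA
            (hw2U q hqA hqw) z1 hqz) hz1out
      · by_cases hqw : q = w3
        · subst hqw
          rcases hz3 z1 hqz with hbb | hzz
          · exact absurd hbb hz1out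
          · exact Or.inr (Or.inl ⟨hzz, hqp⟩)
        · exact absurd (nbrs_in_B hreg hgirth hu3 hu4 hu1 hu2 h14.symm h24.symm h12 hf31 hf32
            hqA (hw3U q hqA hqw) z1 hqz) hz1out
      · by_cases hqw : q = w4
        · subst hqw
          rcases hz4 z1 hqz with hbb | hzz
          · exact absurd hbb hz1out
          · exact Or.inr (Or.inr ⟨hzz, hqp⟩)
        · exact absurd (nbrs_in_B hreg hgirth hu4 hu3 hu1 hu2 h13.symm h23.symm h12 hf41 hf42
            hqA (hw4U q hqA hqw) z1 hqz) hz1out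
  have hR1 := hR p1 hp1 hp1w
  have hR2 := hR p2 hp2 hp2w
  have hx1p1 : G.Adj x1 p1 := mem_Nb.mp (Finset.mem_of_mem_erase hp1)
  have hx1p2 : G.Adj x1 p2 := mem_Nb.mp (Finset.mem_of_mem_erase hp2)
  have hne2 : w2 ≠ x1 := by
    rintro rfl
    exact branch_not_nbu hgirth hu2 (mem_Nb.mp (Finset.mem_of_mem_erase hw2A)) hu1
  have hne3 : w3 ≠ x1 := by
    rintro rfl
    exact branch_not_nbu hgirth hu3 (mem_Nb.mp (Finset.mem_of_mem_erase hw3A)) hu1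
  have hne4 : w4 ≠ x1 := by
    rintro rfl
    exact branch_not_nbu hgirth hu4 (mem_Nb.mp (Finset.mem_of_mem_erase hw4A)) hu1
  rcases hR1 with ⟨he1, ha1⟩ | ⟨he1, ha1⟩ | ⟨he1, ha1⟩ <;>
    rcases hR2 with ⟨he2, ha2⟩ | ⟨he2, ha2⟩ | ⟨he2, ha2⟩
  · exact absurd (cn_unique hgirth hp12 ha1 ha2 hx1p1 hx1p2) hne2
  · exact Or.inl ⟨he1, he2⟩
  · exact Or.inr (Or.inl ⟨he1, he2⟩)
  · exact Or.inl ⟨he2, he1⟩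
  · exact absurd (cn_unique hgirth hp12 ha1 ha2 hx1p1 hx1p2) hne3
  · exact Or.inr (Or.inr ⟨he1, he2⟩)
  · exact Or.inr (Or.inl ⟨he2, he1⟩)
  · exact Or.inr (Or.inr ⟨he2, he1⟩)
  · exact absurd (cn_unique hgirth hp12 ha1 ha2 hx1p1 hx1p2) hne4

lemma core (hreg : ∀ x : V, (G.neighborSet x).ncard = 4) (hgirth : G.girth = 5)
    (hlam : ∀ e ∈ G.edgeSet, {c : G.Subgraph | IsCycleSub G 5 c ∧ e ∈ c.edgeSet}.ncard = 8)
    {u a b c d : V}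
    (hab : a ≠ b) (hac : a ≠ c) (had : a ≠ d) (hbc : b ≠ c) (hbd : b ≠ d) (hcd : c ≠ d)
    (hua : G.Adj u a) (hub : G.Adj u b) (huc : G.Adj u c) (hud : G.Adj u d)
    (hN : Nb G hreg u = {a, b, c, d})
    (hfba : fc G hreg u b a = 2) (hfab : fc G hreg u a b = 2)
    (hfdc : fc G hreg u d c = 2) (hfcd : fc G hreg u c d = 2)
    (hfca : fc G hreg u c a = 3) (hfda : fc G hreg u d a = 3)
    (hfcb : fc G hreg u c b = 3) (hfdb : fc G hreg u d b = 3)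
    (hfac : fc G hreg u a c = 3) (hfbc : fc G hreg u b c = 3)
    (hfad : fc G hreg u a d = 3) (hfbd : fc G hreg u b d = 3) : False := by
  classical
  have hNa : Nb G hreg u = {a, b, c, d} := hN
  have hNb : Nb G hreg u = {b, a, c, d} := by rw [hN]; ext y; simp; tauto
  have hNc : Nb G hreg u = {c, d, a, b} := by rw [hN]; ext y; simp; tauto
  have hNd : Nb G hreg u = {d, c, a, b} := by rw [hN]; ext y; simp; tauto
  have fullca := full_of_fc3 hua hfca
  have fullda := full_of_fc3 hua hfda
  have fullcb := full_of_fc3 hub hfcb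
  have fulldb := full_of_fc3 hub hfdb
  have fullac := full_of_fc3 huc hfac
  have fullbc := full_of_fc3 huc hfbc
  have fullad := full_of_fc3 hud hfad
  have fullbd := full_of_fc3 hud hfbd
  obtain ⟨wa, hwaA, hwaNo, hwaU⟩ := special_of_fc2 hua hfba
  obtain ⟨wb, hwbA, hwbNo, hwbU⟩ := special_of_fc2 hub hfab
  obtain ⟨wc, hwcA, hwcNo, hwcU⟩ := special_of_fc2 huc hfdc
  obtain ⟨wd, hwdA, hwdNo, hwdU⟩ := special_of_fc2 hud hfcd
  obtain ⟨za, hzaadj, hzaout, hzaU⟩ :=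
    special_out hreg hgirth hua hub huc hud hab hac had hcd hNa fullca fullda hwaA hwaNo
  obtain ⟨zb, hzbadj, hzbout, hzbU⟩ :=
    special_out hreg hgirth hub hua huc hud hab.symm hbc hbd hcd hNb fullcb fulldb hwbA hwbNo
  obtain ⟨zc, hzcadj, hzcout, hzcU⟩ :=
    special_out hreg hgirth huc hud hua hub hcd hac.symm hbc.symm hab hNc fullac fullbc hwcA hwcNo
  obtain ⟨zd, hzdadj, hzdout, hzdU⟩ :=
    special_out hreg hgirth hud huc hua hub hcd.symm had.symm hbd.symm hab hNd fullad fullbd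
      hwdA hwdNo
  have Pa := step5 hreg hgirth hlam hab hac had hbc hbd hcd hua hub huc hud hNa
    fullca fullda fullcb fulldb fullac fullbc fullad fullbd
    hwaA hwaU hwbA hwbU hwcA hwcU hwdA hwdU hzaadj hzaout hzbU hzcU hzdU
  have Pb := step5 hreg hgirth hlam hab.symm hbc hbd hac had hcd hub hua huc hud hNb
    fullcb fulldb fullca fullda fullbc fullac fullbd fullad
    hwbA hwbU hwaA hwaU hwcA hwcU hwdA hwdU hzbadj hzbout hzaU hzcU hzdU
  have Pc := step5 hreg hgirth hlam hcd hac.symm hbc.symm had.symm hbd.symm hab huc hud hua hub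
    hNc fullac fullbc fullad fullbd fullca fullda fullcb fulldb
    hwcA hwcU hwdA hwdU hwaA hwaU hwbA hwbU hzcadj hzcout hzdU hzaU hzbU
  have Pd := step5 hreg hgirth hlam hcd.symm had.symm hbd.symm hac.symm hbc.symm hab hud huc hua
    hub hNd fullad fullbd fullac fullbc fullda fullca fulldb fullcb
    hwdA hwdU hwcA hwcU hwaA hwaU hwbA hwbU hzdadj hzdout hzcU hzaU hzbU
  -- all four z's are equal
  have hzeq : zb = za ∧ zc = za ∧ zd = za := by
    rcases Pa with ⟨h1, h2⟩ | ⟨h1, h2⟩ | ⟨h1, h2⟩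
    · refine ⟨h1.symm, h2.symm, ?_⟩
      rcases Pd with ⟨k1, k2⟩ | ⟨k1, k2⟩ | ⟨k1, k2⟩
      · exact k2
      · exact k1.trans h2.symm
      · exact k1
    · refine ⟨h1.symm, ?_, h2.symm⟩
      rcases Pc with ⟨k1, k2⟩ | ⟨k1, k2⟩ | ⟨k1, k2⟩
      · exact k2
      · exact k1.trans h2.symm
      · exact k1
    · refine ⟨?_, h1.symm, h2.symm⟩
      rcases Pb with ⟨k1, k2⟩ | ⟨k1, k2⟩ | ⟨k1, k2⟩
      · exact k1
      · exact k1
      · exact k1.trans h1.symm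
  obtain ⟨hzb, hzc, hzd⟩ := hzeq
  rw [hzb] at hzbadj hzbU
  rw [hzc] at hzcadj hzcU
  rw [hzd] at hzdadj hzdU
  -- distinctness of the specials
  have hwAdj : G.Adj a wa := mem_Nb.mp (Finset.mem_of_mem_erase hwaA)
  have hwbAdj : G.Adj b wb := mem_Nb.mp (Finset.mem_of_mem_erase hwbA)
  have hwcAdj : G.Adj c wc := mem_Nb.mp (Finset.mem_of_mem_erase hwcA)
  have hwdAdj : G.Adj d wd := mem_Nb.mp (Finset.mem_of_mem_erase hwdA)
  have hwdist : ∀ x y wx wy : V, G.Adj u x → G.Adj u y → x ≠ y →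
      wx ∈ (Nb G hreg x).erase u → wy ∈ (Nb G hreg y).erase u → wx ≠ wy := by
    rintro x y wx wy hux huy hxy hwx hwy rfl
    exact branch_disjoint hgirth hux huy hxy (mem_Nb.mp (Finset.mem_of_mem_erase hwx))
      (mem_Nb.mp (Finset.mem_of_mem_erase hwy)) (Finset.ne_of_mem_erase hwx)
  have hwab := hwdist a b wa wb hua hub hab hwaA hwbA
  have hwac := hwdist a c wa wc hua huc hac hwaA hwcA
  have hwad := hwdist a d wa wd hua hud had hwaA hwdA
  have hwbc := hwdist b c wb wc hub huc hbc hwbA hwcA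
  have hwbd := hwdist b d wb wd hub hud hbd hwbA hwdA
  have hwcd := hwdist c d wc wd huc hud hcd hwcA hwdA
  -- Nb za = {wa, wb, wc, wd}
  have hNz : Nb G hreg za = {wa, wb, wc, wd} := by
    have hsub : ({wa, wb, wc, wd} : Finset V) ⊆ Nb G hreg za := by
      intro y hy
      simp only [Finset.mem_insert, Finset.mem_singleton] at hy
      rcases hy with rfl | rfl | rfl | rfl
      · exact mem_Nb.mpr hzaadj.symm
      · exact mem_Nb.mpr hzbadj.symm
      · exact mem_Nb.mpr hzcadj.symm
      · exact mem_Nb.mpr hzdadj.symm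
    have hcard : ({wa, wb, wc, wd} : Finset V).card = 4 := by
      rw [Finset.card_insert_of_notMem (by simp [hwab, hwac, hwad]),
        Finset.card_insert_of_notMem (by simp [hwbc, hwbd]),
        Finset.card_insert_of_notMem (by simp [hwcd]), Finset.card_singleton]
    exact (Finset.eq_of_subset_of_card_le hsub (by rw [card_Nb, hcard])).symm
  -- the closed set S
  set S : Finset V := insert za (BB G hreg u) with hS
  have hBu : u ∈ BB G hreg u := mem_BB.mpr (Or.inl rfl)
  have hBBsub : BB G hreg u ⊆ S := Finset.subset_insert _ _
  have hclo : ∀ x ∈ S, ∀ y, G.Adj x y → y ∈ S := by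
    intro x hx y hxy
    rcases Finset.mem_insert.mp hx with heq | hxB
    · subst heq
      have : y ∈ Nb G hreg x := mem_Nb.mpr hxy
      rw [hNz] at this
      simp only [Finset.mem_insert, Finset.mem_singleton] at this
      rcases this with rfl | rfl | rfl | rfl
      · exact hBBsub (mem_BB.mpr (Or.inr (Or.inr ⟨a, by rw [hN]; simp, hwaA⟩)))
      · exact hBBsub (mem_BB.mpr (Or.inr (Or.inr ⟨b, by rw [hN]; simp, hwbA⟩)))
      · exact hBBsub (mem_BB.mpr (Or.inr (Or.inr ⟨c, by rw [hN]; simp, hwcA⟩)))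
      · exact hBBsub (mem_BB.mpr (Or.inr (Or.inr ⟨d, by rw [hN]; simp, hwdA⟩)))
    · rcases mem_BB.mp hxB with rfl | hxN | ⟨t, htN, hxA⟩
      · exact hBBsub (mem_BB.mpr (Or.inr (Or.inl (mem_Nb.mpr hxy))))
      · by_cases hyu : y = u
        · exact hBBsub (hyu ▸ hBu)
        · exact hBBsub (mem_BB.mpr (Or.inr (Or.inr
            ⟨x, hxN, Finset.mem_erase.mpr ⟨hyu, mem_Nb.mpr hxy⟩⟩)))
      · rw [hN] at htN
        simp only [Finset.mem_insert, Finset.mem_singleton] at htN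
        rcases htN with rfl | rfl | rfl | rfl
        · by_cases hxw : x = wa
          · subst hxw
            rcases hzaU y hxy with hB | rfl
            · exact hBBsub hB
            · exact Finset.mem_insert_self _ _
          · exact hBBsub (nbrs_in_B hreg hgirth hua hub huc hud hbc hbd hcd fullca fullda
              hxA (hwaU x hxA hxw) y hxy)
        · by_cases hxw : x = wb
          · subst hxw
            rcases hzbU y hxy with hB | rfl
            · exact hBBsub hB
            · exact Finset.mem_insert_self _ _
          · exact hBBsub (nbrs_in_B hreg hgirth hub hua huc hud hac had hcd fullcb fulldb
              hxA (hwbU x hxA hxw) y hxy)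
        · by_cases hxw : x = wc
          · subst hxw
            rcases hzcU y hxy with hB | rfl
            · exact hBBsub hB
            · exact Finset.mem_insert_self _ _
          · exact hBBsub (nbrs_in_B hreg hgirth huc hud hua hub had.symm hbd.symm hab
              fullac fullbc hxA (hwcU x hxA hxw) y hxy)
        · by_cases hxw : x = wd
          · subst hxw
            rcases hzdU y hxy with hB | rfl
            · exact hBBsub hB
            · exact Finset.mem_insert_self _ _
          · exact hBBsub (nbrs_in_B hreg hgirth hud huc hua hub hac.symm hbc.symm hab
              fullad fullbd hxA (hwdU x hxA hxw) y hxy)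
  -- |S| = 18
  have hcardS : S.card = 18 := by
    rw [hS, Finset.card_insert_of_notMem hzaout, BB]
    have hu1 : u ∉ Nb G hreg u ∪ (Nb G hreg u).biUnion (fun x => (Nb G hreg x).erase u) := by
      rw [Finset.mem_union, Finset.mem_biUnion]
      rintro (h | ⟨x, hx, h⟩)
      · exact G.irrefl (mem_Nb.mp h)
      · exact Finset.notMem_erase u _ h
    rw [Finset.card_insert_of_notMem hu1]
    have hdisj : Disjoint (Nb G hreg u) ((Nb G hreg u).biUnion (fun x => (Nb G hreg x).erase u)) := by
      rw [Finset.disjoint_left]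
      intro y hy hy2
      obtain ⟨x, hx, hyA⟩ := Finset.mem_biUnion.mp hy2
      exact branch_not_nbu hgirth (mem_Nb.mp hx) (mem_Nb.mp (Finset.mem_of_mem_erase hyA))
        (mem_Nb.mp hy)
    rw [Finset.card_union_of_disjoint hdisj, card_Nb]
    have hbi : ((Nb G hreg u).biUnion (fun x => (Nb G hreg x).erase u)).card = 12 := by
      rw [Finset.card_biUnion]
      · rw [Finset.sum_congr rfl (fun x hx => card_branch (mem_Nb.mp hx)), Finset.sum_const,
          card_Nb]
        simp
      · intro x hx y hy hxy
        rw [Function.onFun, Finset.disjoint_left]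
        intro t ht ht2
        exact branch_disjoint hgirth (mem_Nb.mp hx) (mem_Nb.mp hy) hxy
          (mem_Nb.mp (Finset.mem_of_mem_erase ht)) (mem_Nb.mp (Finset.mem_of_mem_erase ht2))
          (Finset.ne_of_mem_erase ht)
    rw [hbi]
  -- the double count
  set D : Finset (V × V) := (S ×ˢ S).filter (fun p => G.Adj p.1 p.2) with hD
  have hDcard : D.card = 72 := by
    rw [hD, card_filter_product]
    have : ∀ x ∈ S, (S.filter (fun y => G.Adj x y)).card = 4 := by
      intro x hx
      have : S.filter (fun y => G.Adj x y) = Nb G hreg x := by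
        ext y
        rw [Finset.mem_filter, mem_Nb]
        exact ⟨fun h => h.2, fun h => ⟨hclo x hx y h, h⟩⟩
      rw [this, card_Nb]
    rw [Finset.sum_congr rfl this, Finset.sum_const, hcardS]
    simp
  set TC : Finset G.Subgraph :=
    ((S ×ˢ S ×ˢ S ×ˢ S ×ˢ S).image (pentSub G)).filter (fun c => IsCycleSub G 5 c) with hTC
  have hsum1 : ∀ p ∈ D, (TC.filter (fun c => s(p.1, p.2) ∈ c.edgeSet)).card = 8 := by
    rintro ⟨y1, y2⟩ hp
    rw [hD, Finset.mem_filter, Finset.mem_product] at hp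
    obtain ⟨⟨h1S, h2S⟩, hadj⟩ := hp
    have h8 := hlam s(y1, y2) hadj
    have hseteq : {c : G.Subgraph | IsCycleSub G 5 c ∧ s(y1, y2) ∈ c.edgeSet} =
        ↑(TC.filter (fun c => s(y1, y2) ∈ c.edgeSet)) := by
      ext ct
      simp only [Set.mem_setOf_eq, Finset.coe_filter, hTC, Finset.mem_filter]
      constructor
      · rintro ⟨hcyc, he⟩
        have := cycle_in_S hclo hcyc h1S he
        rw [Finset.mem_filter] at this
        exact ⟨⟨this.1, this.2⟩, he⟩
      · rintro ⟨⟨-, hcyc⟩, he⟩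
        exact ⟨hcyc, he⟩
    rw [hseteq, Set.ncard_coe_finset] at h8
    exact h8
  have hsum2 : ∀ ct ∈ TC, (D.filter (fun p => s(p.1, p.2) ∈ ct.edgeSet)).card = 10 := by
    intro ct hct
    rw [hTC, Finset.mem_filter] at hct
    obtain ⟨himg, hcyc⟩ := hct
    obtain ⟨q, hq, rfl⟩ := Finset.mem_image.mp himg
    have hverts : (pentSub G q).verts ⊆ ↑S := by
      rw [pentSub]
      simp only [Finset.mem_product] at hq
      split
      · rw [pentW_verts]
        intro y hy
        simp only [Set.mem_insert_iff, Set.mem_singleton_iff] at hy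
        rcases hy with rfl | rfl | rfl | rfl | rfl
        · exact hq.1
        · exact hq.2.1
        · exact hq.2.2.1
        · exact hq.2.2.2.1
        · exact hq.2.2.2.2
      · simp [Subgraph.verts_bot]
    exact ten_pairs hgirth hcyc hverts
  have hswap := sum_card_swap D TC (fun p ct => s(p.1, p.2) ∈ ct.edgeSet)
  rw [Finset.sum_congr rfl hsum1, Finset.sum_congr rfl hsum2, Finset.sum_const,
    Finset.sum_const, hDcard] at hswap
  simp only [smul_eq_mul] at hswap
  omega

lemma arith6 (e1 e2 e3 e4 e5 e6 : ℕ) (b1 : e1 ≤ 3) (b2 : e2 ≤ 3) (b3 : e3 ≤ 3)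
    (b4 : e4 ≤ 3) (b5 : e5 ≤ 3) (b6 : e6 ≤ 3)
    (r1 : e1 + (e2 + e3) = 8) (r2 : e1 + (e4 + e5) = 8)
    (r3 : e2 + (e4 + e6) = 8) (r4 : e3 + (e5 + e6) = 8) :
    (e1 = 2 ∧ e6 = 2 ∧ e2 = 3 ∧ e3 = 3 ∧ e4 = 3 ∧ e5 = 3) ∨
    (e2 = 2 ∧ e5 = 2 ∧ e1 = 3 ∧ e3 = 3 ∧ e4 = 3 ∧ e6 = 3) ∨
    (e3 = 2 ∧ e4 = 2 ∧ e1 = 3 ∧ e2 = 3 ∧ e5 = 3 ∧ e6 = 3) := by omega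

set_option maxHeartbeats 1000000 in
lemma no_egr_graph {V : Type} (G : SimpleGraph V)
    (hreg : ∀ x : V, (G.neighborSet x).ncard = 4) (hgirth : G.girth = 5)
    (hlam : ∀ e ∈ G.edgeSet, {c : G.Subgraph | IsCycleSub G 5 c ∧ e ∈ c.edgeSet}.ncard = 8)
    (u : V) : False := by
  classical
  obtain ⟨a, b, c, d, hab, hac, had, hbc, hbd, hcd, hN⟩ :=
    card_eq_four (card_Nb (hreg := hreg) u)
  have hua : G.Adj u a := mem_Nb.mp (by rw [hN]; simp)
  have hub : G.Adj u b := mem_Nb.mp (by rw [hN]; simp)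
  have huc : G.Adj u c := mem_Nb.mp (by rw [hN]; simp)
  have hud : G.Adj u d := mem_Nb.mp (by rw [hN]; simp)
  have hea : (Nb G hreg u).erase a = {b, c, d} := by
    rw [hN]
    ext y
    simp only [Finset.mem_erase, Finset.mem_insert, Finset.mem_singleton]
    constructor
    · rintro ⟨hne, h⟩; tauto
    · rintro (rfl | rfl | rfl)
      exacts [⟨hab.symm, by simp⟩, ⟨hac.symm, by simp⟩, ⟨had.symm, by simp⟩]
  have heb : (Nb G hreg u).erase b = {a, c, d} := by
    rw [hN]
    ext y
    simp only [Finset.mem_erase, Finset.mem_insert, Finset.mem_singleton]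
    constructor
    · rintro ⟨hne, h⟩; tauto
    · rintro (rfl | rfl | rfl)
      exacts [⟨hab, by simp⟩, ⟨hbc.symm, by simp⟩, ⟨hbd.symm, by simp⟩]
  have hec : (Nb G hreg u).erase c = {a, b, d} := by
    rw [hN]
    ext y
    simp only [Finset.mem_erase, Finset.mem_insert, Finset.mem_singleton]
    constructor
    · rintro ⟨hne, h⟩; tauto
    · rintro (rfl | rfl | rfl)
      exacts [⟨hac, by simp⟩, ⟨hbc, by simp⟩, ⟨hcd.symm, by simp⟩]
  have hed : (Nb G hreg u).erase d = {a, b, c} := by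
    rw [hN]
    ext y
    simp only [Finset.mem_erase, Finset.mem_insert, Finset.mem_singleton]
    constructor
    · rintro ⟨hne, h⟩; tauto
    · rintro (rfl | rfl | rfl)
      exacts [⟨had, by simp⟩, ⟨hbd, by simp⟩, ⟨hcd, by simp⟩]
  have Ra := row hreg hgirth hlam hua
  have Rb := row hreg hgirth hlam hub
  have Rc := row hreg hgirth hlam huc
  have Rd := row hreg hgirth hlam hud
  rw [hea, Finset.sum_insert (by simp [hbc, hbd]), Finset.sum_insert (by simp [hcd]),
    Finset.sum_singleton] at Ra
  rw [heb, Finset.sum_insert (by simp [hac, had]), Finset.sum_insert (by simp [hcd]),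
    Finset.sum_singleton] at Rb
  rw [hec, Finset.sum_insert (by simp [hab, had]), Finset.sum_insert (by simp [hbd]),
    Finset.sum_singleton] at Rc
  rw [hed, Finset.sum_insert (by simp [hab, hac]), Finset.sum_insert (by simp [hbc]),
    Finset.sum_singleton] at Rd
  have sab := fsym hreg hgirth hua hub hab
  have sac := fsym hreg hgirth hua huc hac
  have sad := fsym hreg hgirth hua hud had
  have sbc := fsym hreg hgirth hub huc hbc
  have sbd := fsym hreg hgirth hub hud hbd
  have scd := fsym hreg hgirth huc hud hcd
  rw [sab] at Rb
  rw [sac, sbc] at Rc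
  rw [sad, sbd, scd] at Rd
  have hcases := arith6 _ _ _ _ _ _ (fc_le hua) (fc_le hua) (fc_le hua) (fc_le hub)
    (fc_le hub) (fc_le huc) Ra Rb Rc Rd
  have hNac : Nb G hreg u = {a, c, b, d} := by rw [hN]; ext y; simp; tauto
  have hNad : Nb G hreg u = {a, d, b, c} := by rw [hN]; ext y; simp; tauto
  rcases hcases with ⟨e1, e6, e2, e3, e4, e5⟩ | ⟨e2, e5, e1, e3, e4, e6⟩ |
    ⟨e3, e4, e1, e2, e5, e6⟩
  · exact core hreg hgirth hlam hab hac had hbc hbd hcd hua hub huc hud hN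
      e1 (sab.trans e1) e6 (scd.trans e6) e2 e3 e4 e5 (sac.trans e2) (sbc.trans e4)
      (sad.trans e3) (sbd.trans e5)
  · exact core hreg hgirth hlam hac hab had hbc.symm hcd hbd hua huc hub hud hNac
      e2 (sac.trans e2) e5 (sbd.trans e5) e1 e3 (sbc.trans e4) e6 (sab.trans e1) e4 (sad.trans e3) (scd.trans e6)
  · exact core hreg hgirth hlam had hab hac hbd.symm hcd.symm hbc hua hud hub huc hNad
      e3 (sad.trans e3) e4 (sbc.trans e4) e1 e2 (sbd.trans e5) (scd.trans e6) (sab.trans e1) e5 (sac.trans e2) e6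

/-- There is no egr(v,4,5,8)-graph (using the known fact that there is no such graph on
18 vertices). -/
theorem stmt_14
    (known : ∀ (W : Type) (H : SimpleGraph W), ¬ IsEGR H 18 4 5 8) :
    ¬ ∃ (V : Type) (G : SimpleGraph V) (v : ℕ), IsEGR G v 4 5 8 := by
  rintro ⟨V, G, v, hcard, hreg, hgirth, hlam⟩
  have hne : ¬ G.IsAcyclic := by
    intro h
    rw [h.girth_eq_zero] at hgirth
    omega
  obtain ⟨u, w0, -, -⟩ := SimpleGraph.exists_girth_eq_length.mpr hne
  exact no_egr_graph G hreg hgirth hlam u
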